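/- In B₃⁺, if e_r = 1 for some r with p > r ≥ 3 appears in a prospective alternating decomposition, the decomposition fails: concretely, for any a, b ≥ 0, the braid σ₁^{a+1}σ₂σ₁^{b+1} equals σ₁^a σ₂^{b+1} σ₁ σ₂ in B₃⁺; in particular σ₁^{a+1}σ₂σ₁^{b+1} is right-divisible by σ₂. -/

import Mathlib

/-- The braid relations on the free monoid over `Fin N`
(generator `i : Fin N` stands for `σ_{i+1}`). -/
def braidRel (N : ℕ) : FreeMonoid (Fin N) → FreeMonoid (Fin N) → Prop := fun a b =>
  (∃ i j : Fin N, ((i : ℕ) + 2 ≤ (j : ℕ) ∨ (j : ℕ) + 2 ≤ (i : ℕ)) ∧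
      a = FreeMonoid.of i * FreeMonoid.of j ∧ b = FreeMonoid.of j * FreeMonoid.of i) ∨
  (∃ i j : Fin N, ((i : ℕ) + 1 = (j : ℕ) ∨ (j : ℕ) + 1 = (i : ℕ)) ∧
      a = FreeMonoid.of i * FreeMonoid.of j * FreeMonoid.of i ∧
      b = FreeMonoid.of j * FreeMonoid.of i * FreeMonoid.of j)

def braidCon (N : ℕ) : Con (FreeMonoid (Fin N)) := conGen (braidRel N)

/-- The positive braid monoid on `N+1` strands `B_{N+1}⁺`,
with generators `σ_1, …, σ_N` indexed by `Fin N`. -/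
abbrev PosBraid (N : ℕ) := (braidCon N).Quotient

/-- The generator `σ_{i+1}` of the positive braid monoid. -/
def sigma {N : ℕ} (i : Fin N) : PosBraid N := (braidCon N).mk' (FreeMonoid.of i)

/-- The flip automorphism `Φ_{N+1} : σ_i ↦ σ_{N+1-i}`. -/
def flipH (N : ℕ) : PosBraid N →* PosBraid N :=
  Con.lift _ ((braidCon N).mk'.comp (FreeMonoid.map Fin.rev)) <| by
    apply Con.conGen_le.mpr
    rintro a b (⟨i, j, hij, rfl, rfl⟩ | ⟨i, j, hij, rfl, rfl⟩) <;>
      simp only [Con.ker_rel, MonoidHom.comp_apply, map_mul, FreeMonoid.map_of] <;>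
      refine (Con.eq _).mpr (ConGen.Rel.of _ _ ?_)
    · exact Or.inl ⟨Fin.rev i, Fin.rev j, by
        simp only [Fin.val_rev]; omega, rfl, rfl⟩
    · exact Or.inr ⟨Fin.rev i, Fin.rev j, by
        simp only [Fin.val_rev]; omega, rfl, rfl⟩

/-- The inclusion `B_{N+1}⁺ → B_{N+2}⁺`. -/
def incl (N : ℕ) : PosBraid N →* PosBraid (N + 1) :=
  Con.lift _ ((braidCon (N + 1)).mk'.comp (FreeMonoid.map Fin.castSucc)) <| by
    apply Con.conGen_le.mpr
    rintro a b (⟨i, j, hij, rfl, rfl⟩ | ⟨i, j, hij, rfl, rfl⟩) <;>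
      simp only [Con.ker_rel, MonoidHom.comp_apply, map_mul, FreeMonoid.map_of] <;>
      refine (Con.eq _).mpr (ConGen.Rel.of _ _ ?_)
    · exact Or.inl ⟨i.castSucc, j.castSucc, by simpa using hij, rfl, rfl⟩
    · exact Or.inr ⟨i.castSucc, j.castSucc, by simpa using hij, rfl, rfl⟩

/-- Product `f^{p-1}(x_p) ⋯ f(x_2) · x_1` of the list `[x_p, …, x_1]`,
where each entry is twisted by an iterate of `f`. -/
def prodFlip {M : Type*} [Monoid M] (f : M → M) : List M → M
  | [] => 1
  | a :: t => f^[t.length] a * prodFlip f t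

/-- `l = [x_p, …, x_1]` (a list of elements of `B_{k+1}⁺`) is the `(k+2)`-splitting of
`x ∈ B_{k+2}⁺` : `x = Φ^{p-1}(x_p) ⋯ Φ(x_2)·x_1`, the leading entry is non-trivial, and
for every `r ≥ 2` the only generator `σ_i` right-dividing `Φ^{p-r}(x_p) ⋯ Φ(x_{r+1})·x_r`
is `σ_1`. -/
def IsSplit {k : ℕ} (x : PosBraid (k + 1)) (l : List (PosBraid k)) : Prop :=
  x = prodFlip (⇑(flipH (k + 1))) (l.map (incl k)) ∧
  l.head? ≠ some 1 ∧
  ∀ j, 1 ≤ j → j < l.length →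
    (∃ z, prodFlip (⇑(flipH (k + 1))) ((l.take j).map (incl k)) =
        z * sigma (⟨0, Nat.succ_pos k⟩ : Fin (k + 1))) ∧
    ∀ i : Fin (k + 1),
      (∃ z, prodFlip (⇑(flipH (k + 1))) ((l.take j).map (incl k)) = z * sigma i) →
      i = (⟨0, Nat.succ_pos k⟩ : Fin (k + 1))

/-- `σ_{i+1}` as an element of `B_{N+1}⁺`, extended by `1` for out-of-range indices. -/
def sigmaP (N : ℕ) (i : ℕ) : PosBraid N := if h : i < N then sigma ⟨i, h⟩ else 1

/-- `δ_{N+1} = σ_N σ_{N-1} ⋯ σ_1` in `B_{N+1}⁺`. -/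
def deltaFull (N : ℕ) : PosBraid N := ((List.ofFn (sigma (N := N))).reverse).prod

/-- `Δ_m` (the Garside element of `B_m⁺`), viewed inside `B_{N+1}⁺`,
via `Δ_1 = 1` and `Δ_{m+1} = σ_1 ⋯ σ_m · Δ_m`. -/
def DeltaP (N : ℕ) : ℕ → PosBraid N
  | 0 => 1
  | m + 1 => ((List.range m).map (sigmaP N)).prod * DeltaP N m

/-- `\widehatΔ_{N+1,d} = Φ^d(δ_{N+1}) ⋯ Φ²(δ_{N+1}) · Φ(δ_{N+1})` (`d` factors). -/
def hatDelta (N : ℕ) (d : ℕ) : PosBraid N :=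
  ((List.range d).map (fun j => (⇑(flipH N))^[d - j] (deltaFull N))).prod

/-- ShortLex extension of a relation: compare lists first by length,
then lexicographically (from the left). -/
def SL {α : Type*} (r : α → α → Prop) (s t : List α) : Prop :=
  s.length < t.length ∨ (s.length = t.length ∧ List.Lex r s t)

/-- The ordering `<⁺` of `B_{k+1}⁺`, defined recursively: on `B_2⁺` it is the comparison
of exponents of `σ_1`; on `B_{k+2}⁺` it is the ShortLex comparison of `(k+2)`-splittings,
entries being compared by `<⁺` on `B_{k+1}⁺`. -/
def ordP : (k : ℕ) → PosBraid k → PosBraid k → Prop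
  | 0 => fun _ _ => False
  | 1 => fun x y => ∃ p q : ℕ, x = sigma (0 : Fin 1) ^ p ∧ y = sigma (0 : Fin 1) ^ q ∧ p < q
  | (k + 2) => fun x y => ∃ lx ly : List (PosBraid (k + 1)),
      IsSplit x lx ∧ IsSplit y ly ∧ SL (ordP (k + 1)) lx ly

/-- in `B_3⁺`, for any `a, b ≥ 0`,
`σ_1^{a+1} σ_2 σ_1^{b+1} = σ_1^a σ_2^{b+1} σ_1 σ_2`; in particular
`σ_1^{a+1} σ_2 σ_1^{b+1}` is right-divisible by `σ_2`. -/

lemma braid012 : sigma (0 : Fin 2) * sigma (1 : Fin 2) * sigma (0 : Fin 2) =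
    sigma (1 : Fin 2) * sigma (0 : Fin 2) * sigma (1 : Fin 2) := by
  refine (Con.eq _).mpr (ConGen.Rel.of _ _ ?_)
  exact Or.inr ⟨0, 1, by simp, rfl, rfl⟩

lemma main_eq (a b : ℕ) :
    sigma (0 : Fin 2) ^ (a + 1) * sigma (1 : Fin 2) * sigma (0 : Fin 2) ^ (b + 1) =
      sigma (0 : Fin 2) ^ a * sigma (1 : Fin 2) ^ (b + 1) * sigma (0 : Fin 2) *
        sigma (1 : Fin 2) := by
  induction b with
  | zero =>
    have : sigma (0 : Fin 2) ^ (a+1) = sigma (0:Fin 2)^a * sigma (0:Fin 2) := pow_succ _ _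
    rw [this, pow_one, pow_one, mul_assoc, mul_assoc, mul_assoc, mul_assoc, ← mul_assoc (sigma (0:Fin 2)), braid012]
    simp [mul_assoc]
  | succ b ih =>
    have h1 : sigma (0 : Fin 2) ^ (b + 2) = sigma (0:Fin 2) ^ (b+1) * sigma (0:Fin 2) := pow_succ _ _
    rw [h1, ← mul_assoc, ih]
    rw [show sigma (0 : Fin 2) ^ a * sigma (1 : Fin 2) ^ (b + 1) * sigma (0 : Fin 2) *
        sigma (1 : Fin 2) * sigma (0:Fin 2) = sigma (0 : Fin 2) ^ a * sigma (1 : Fin 2) ^ (b + 1) *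
        (sigma (0 : Fin 2) * sigma (1 : Fin 2) * sigma (0:Fin 2)) by simp [mul_assoc], braid012,
      show sigma (1:Fin 2)^(b+2) = sigma (1:Fin 2)^(b+1) * sigma (1:Fin 2) from pow_succ _ _]
    simp [mul_assoc]

theorem sigma_pow_identity (a b : ℕ) :
    sigma (0 : Fin 2) ^ (a + 1) * sigma (1 : Fin 2) * sigma (0 : Fin 2) ^ (b + 1) =
      sigma (0 : Fin 2) ^ a * sigma (1 : Fin 2) ^ (b + 1) * sigma (0 : Fin 2) *
        sigma (1 : Fin 2) ∧
    ∃ z : PosBraid 2,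
      sigma (0 : Fin 2) ^ (a + 1) * sigma (1 : Fin 2) * sigma (0 : Fin 2) ^ (b + 1) =
        z * sigma (1 : Fin 2) :=
  ⟨main_eq a b, ⟨_, main_eq a b⟩⟩
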